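/- Let A ∈ ℤ^{m×n} with 1 ≤ m < n satisfy the regularity assumptions, let v = A·1, and let L_A^⊥ = {z ∈ ℤ^n : A z = 0}. Then the covering radius satisfies μ_1(P(A, v) − 1, L_A^⊥) ≤ ((n−m)/2)·√(det(A Aᵀ)), where P(A, v) − 1 is the translate of the knapsack polytope P(A, v) by the negative of the all-ones vector. -/

import Mathlib

open scoped BigOperators
open Matrix

noncomputable section

/-- The real matrix obtained from an integer matrix. -/
def Rmat {m n : ℕ} (A : Matrix (Fin m) (Fin n) ℤ) : Matrix (Fin m) (Fin n) ℝ :=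
  A.map (Int.cast : ℤ → ℝ)

/-- The real vector obtained from an integer vector. -/
def Rvec {m : ℕ} (b : Fin m → ℤ) : Fin m → ℝ := fun i => (b i : ℝ)

/-- The knapsack polytope P(A,b) = {x ≥ 0 : A x = b}. -/
def knap {m n : ℕ} (A : Matrix (Fin m) (Fin n) ℤ) (b : Fin m → ℝ) : Set (Fin n → ℝ) :=
  {x | (∀ i, 0 ≤ x i) ∧ (Rmat A).mulVec x = b}

/-- The set F_s(A) of integer vectors b for which P(A,b) contains at least s integer points. -/
def feas {m n : ℕ} (s : ℕ) (A : Matrix (Fin m) (Fin n) ℤ) : Set (Fin m → ℤ) :=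
  {b | s ≤ Set.ncard {x : Fin n → ℤ | (∀ i, 0 ≤ x i) ∧ A.mulVec x = b}}

/-- The cone generated by the columns of A. -/
def coneOf {m n : ℕ} (A : Matrix (Fin m) (Fin n) ℤ) : Set (Fin m → ℝ) :=
  {y | ∃ x : Fin n → ℝ, (∀ i, 0 ≤ x i) ∧ (Rmat A).mulVec x = y}

/-- The generalized diagonal s-Frobenius number g_s(A, w). -/
def gDiag {m n : ℕ} (s : ℕ) (A : Matrix (Fin m) (Fin n) ℤ) (w : Fin m → ℝ) : ℝ :=
  sInf {t : ℝ | 0 ≤ t ∧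
    ∀ b : Fin m → ℤ, Rvec b ∈ interior ((fun c => t • w + c) '' coneOf A) → b ∈ feas s A}

/-- v = A·1 is the sum of the columns of A (as a real vector). -/
def vA {m n : ℕ} (A : Matrix (Fin m) (Fin n) ℤ) : Fin m → ℝ :=
  (Rmat A).mulVec (fun _ => 1)

/-- The diagonal s-Frobenius number g_s(A) = g_s(A, A·1). -/
def gFrob {m n : ℕ} (s : ℕ) (A : Matrix (Fin m) (Fin n) ℤ) : ℝ := gDiag s A (vA A)

/-- The regularity assumptions: the m×m minors of A have gcd 1, and the only
nonnegative real solution of A x = 0 is x = 0. -/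
def regular {m n : ℕ} (A : Matrix (Fin m) (Fin n) ℤ) : Prop :=
  Finset.univ.gcd (fun I : Fin m ↪ Fin n => (A.submatrix id ⇑I).det) = 1 ∧
  ∀ x : Fin n → ℝ, (∀ i, 0 ≤ x i) → (Rmat A).mulVec x = 0 → x = 0

/-- The s-covering radius of K with respect to L: the smallest μ > 0 such that every
point of the real span of L lies in y + μK for at least s distinct y ∈ L. -/
def muCov {N : ℕ} (s : ℕ) (K L : Set (Fin N → ℝ)) : ℝ :=
  sInf {μ : ℝ | 0 < μ ∧ ∀ x ∈ Submodule.span ℝ L,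
    ∃ T : Finset (Fin N → ℝ), ↑T ⊆ L ∧ s ≤ T.card ∧ ∀ y ∈ T, ∃ k ∈ K, x = y + μ • k}

/-- The set of absolute values of m×m minors of A. -/
def minorAbs {m n : ℕ} (A : Matrix (Fin m) (Fin n) ℤ) : Set ℤ :=
  {d | ∃ I : Fin m ↪ Fin n, d = |(A.submatrix id ⇑I).det|}

/-- m(A): the minimal absolute m×m minor of A. -/
def mMin {m n : ℕ} (A : Matrix (Fin m) (Fin n) ℤ) : ℤ := sInf (minorAbs A)

/-- M(A): the maximal absolute m×m minor of A. -/
def mMax {m n : ℕ} (A : Matrix (Fin m) (Fin n) ℤ) : ℤ := sSup (minorAbs A)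

/-- The lattice L_A^⊥ = {z ∈ ℤ^n : A z = 0}, viewed as a subset of ℝ^n. -/
def kerLat {m n : ℕ} (A : Matrix (Fin m) (Fin n) ℤ) : Set (Fin n → ℝ) :=
  {x | ∃ z : Fin n → ℤ, A.mulVec z = 0 ∧ x = Rvec z}

/-- √(det (A Aᵀ)). -/
def sqrtDet {m n : ℕ} (A : Matrix (Fin m) (Fin n) ℤ) : ℝ :=
  Real.sqrt (((A * Aᵀ).det : ℤ) : ℝ)

/-- The s-Frobenius number of a positive primitive integer vector. -/
def sFrob {n : ℕ} (s : ℕ) (a : Fin n → ℤ) : ℤ :=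
  sSup {b : ℤ | Set.ncard {x : Fin n → ℤ | (∀ i, 0 ≤ x i) ∧ ∑ i, a i * x i = b} < s}

/-- The full-rank lattice in ℝ^d with basis the columns of an invertible matrix B. -/
def latSet {d : ℕ} (B : Matrix (Fin d) (Fin d) ℝ) : Set (Fin d → ℝ) :=
  {x | ∃ z : Fin d → ℤ, x = B.mulVec (fun i => (z i : ℝ))}

/-- The absolute s-inhomogeneous minimum ϑ_s(K) = inf_L μ_s(K,L)/det(L)^{1/d}. -/
def theta (s d : ℕ) (K : Set (Fin d → ℝ)) : ℝ :=
  sInf {r : ℝ | ∃ B : Matrix (Fin d) (Fin d) ℝ, B.det ≠ 0 ∧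
    r = muCov s K (latSet B) / |B.det| ^ ((1 : ℝ) / d)}

/-- The standard simplex S_d ⊂ ℝ^d. -/
def stdSimplex' (d : ℕ) : Set (Fin d → ℝ) :=
  {x | (∀ i, 0 ≤ x i) ∧ ∑ i, x i ≤ 1}


/-! ### Auxiliary lemmas for Lemma 4 -/

lemma one_le_det_one_add' {k : ℕ} (Y : Matrix (Fin k) (Fin k) ℝ) (hY : Y.PosSemidef) :
    1 ≤ (1 + Y).det := by
  have h1 : (1 + Y).PosSemidef := Matrix.PosSemidef.one.add hY
  have hH : (1 + Y).IsHermitian := h1.1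
  rw [hH.det_eq_prod_eigenvalues]
  have hev : ∀ i, 1 ≤ hH.eigenvalues i := by
    intro i
    rw [hH.eigenvalues_eq i]
    set v := (hH.eigenvectorBasis i).ofLp with hv
    have hnorm : star v ⬝ᵥ v = 1 := by
      have h2 : ‖hH.eigenvectorBasis i‖ = 1 := hH.eigenvectorBasis.orthonormal.1 i
      have := EuclideanSpace.inner_eq_star_dotProduct (hH.eigenvectorBasis i)
        (hH.eigenvectorBasis i)
      rw [real_inner_self_eq_norm_sq, h2] at this
      simpa using this.symm
    have hsplit : star v ⬝ᵥ (1 + Y) *ᵥ v = star v ⬝ᵥ v + star v ⬝ᵥ Y *ᵥ v := by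
      rw [Matrix.add_mulVec, dotProduct_add, Matrix.one_mulVec]
    rw [hsplit, hnorm]
    have := hY.re_dotProduct_nonneg v
    simp only [RCLike.re_to_real] at this ⊢
    linarith
  calc (1:ℝ) = ∏ _i : Fin k, 1 := by simp
  _ ≤ ∏ i, hH.eigenvalues i := Finset.prod_le_prod (by simp) (by simpa using hev)
  _ = _ := by norm_num

lemma split_gram' {m n : ℕ} (R : Matrix (Fin m) (Fin n) ℝ) (h : Fin m → Fin n)
    (hinj : Function.Injective h) :
    R * Rᵀ = (R.submatrix id h) * (R.submatrix id h)ᵀ +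
      (Matrix.of (fun i (c : {c // c ∉ Finset.univ.image h}) => R i c.1)) *
      (Matrix.of (fun i (c : {c // c ∉ Finset.univ.image h}) => R i c.1))ᵀ := by
  ext i k
  simp only [Matrix.mul_apply, Matrix.add_apply, Matrix.transpose_apply, Matrix.submatrix_apply,
    Matrix.of_apply, id]
  rw [← Finset.sum_add_sum_compl (Finset.univ.image h) (fun c => R i c * R k c)]
  congr 1
  · rw [Finset.sum_image (fun a _ b _ hab => hinj hab)]
  · rw [← Finset.sum_subtype (Finset.univ.image h)ᶜ (fun x => Finset.mem_compl)
      (fun c => R i c * R k c)]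

lemma det_sq_le'' {m n : ℕ} (R : Matrix (Fin m) (Fin n) ℝ) (h : Fin m → Fin n)
    (hinj : Function.Injective h) (h0 : (R.submatrix id h).det ≠ 0) :
    (R.submatrix id h).det ^ 2 ≤ (R * Rᵀ).det := by
  set B := R.submatrix id h with hB
  set C := (Matrix.of (fun i (c : {c // c ∉ Finset.univ.image h}) => R i c.1)) with hC
  have hU : IsUnit B.det := isUnit_iff_ne_zero.mpr h0
  set W := B⁻¹ * C with hW
  have key : R * Rᵀ = B * (1 + W * Wᵀ) * Bᵀ := by
    have h1 : B * W = C := by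
      rw [hW, ← Matrix.mul_assoc, Matrix.mul_nonsing_inv B hU, Matrix.one_mul]
    calc R * Rᵀ = B * Bᵀ + C * Cᵀ := split_gram' R h hinj
    _ = B * Bᵀ + (B * W) * (B * W)ᵀ := by rw [h1]
    _ = B * (1 + W * Wᵀ) * Bᵀ := by
        rw [Matrix.transpose_mul, Matrix.mul_add, Matrix.add_mul, Matrix.mul_one]
        rw [Matrix.mul_assoc B W _, ← Matrix.mul_assoc W Wᵀ Bᵀ, ← Matrix.mul_assoc B (W * Wᵀ) Bᵀ]
  have hPSD : (W * Wᵀ).PosSemidef := by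
    have := Matrix.posSemidef_self_mul_conjTranspose W
    rwa [Matrix.conjTranspose_eq_transpose_of_trivial] at this
  have h1le : 1 ≤ (1 + W * Wᵀ).det := one_le_det_one_add' _ hPSD
  rw [key, Matrix.det_mul, Matrix.det_mul, Matrix.det_transpose]
  nlinarith [sq_nonneg B.det]

/-- Upper bound for the covering radius of P(A,v) − 1 in terms of √det(AAᵀ) (Lemma 4). -/
theorem stmt_9 {m n : ℕ} (hm : 1 ≤ m) (hmn : m < n)
    (A : Matrix (Fin m) (Fin n) ℤ) (hA : regular A) :
    muCov 1 ((fun x => x - fun _ => (1 : ℝ)) '' knap A (vA A)) (kerLat A) ≤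
      ((n : ℝ) - m) / 2 * sqrtDet A := by
  classical
  obtain ⟨hgcd, _hpos⟩ := hA
  -- a nonzero m×m minor exists
  obtain ⟨g, hg⟩ : ∃ g : Fin m ↪ Fin n, (A.submatrix id ⇑g).det ≠ 0 := by
    by_contra hcon
    push_neg at hcon
    have h0 : Finset.univ.gcd (fun I : Fin m ↪ Fin n => (A.submatrix id ⇑I).det) = 0 :=
      Finset.gcd_eq_zero_iff.mpr (fun I _ => hcon I)
    rw [hgcd] at h0
    exact one_ne_zero h0
  set R := Rmat A with hRdef
  -- cast lemmas
  have hmapdet : ∀ h : Fin m → Fin n, (R.submatrix id h).det = ((A.submatrix id h).det : ℝ) := by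
    intro h
    have := (Int.castRingHom ℝ).map_det (A.submatrix id h)
    rw [RingHom.mapMatrix_apply] at this
    simp only [Int.coe_castRingHom] at this
    rw [hRdef]
    show ((A.map _).submatrix id h).det = _
    rw [Matrix.submatrix_map]
    rw [← this]
  have hgram : (R * Rᵀ).det = (((A * Aᵀ).det : ℤ) : ℝ) := by
    have hmul : R * Rᵀ = (A * Aᵀ).map (Int.cast : ℤ → ℝ) := by
      simp only [← Int.coe_castRingHom (α := ℝ)]
      rw [Matrix.map_mul (f := Int.castRingHom ℝ), hRdef]
      show _ = Rmat A * (Aᵀ).map _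
      rw [Matrix.transpose_map]
      rfl
    rw [hmul]
    have := (Int.castRingHom ℝ).map_det (A * Aᵀ)
    rw [RingHom.mapMatrix_apply] at this
    simp only [Int.coe_castRingHom] at this
    rw [← this]
  have hcastvec : ∀ v : Fin n → ℤ, R *ᵥ Rvec v = Rvec (A *ᵥ v) := by
    intro v
    funext i
    simp only [hRdef, Rmat, Rvec, Matrix.mulVec, dotProduct, Matrix.map_apply]
    push_cast
    rfl
  -- positivity of det(AAᵀ)
  have hBRdet : (R.submatrix id ⇑g).det ≠ 0 := by
    rw [hmapdet]
    exact_mod_cast hg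
  have hdetpos : (0:ℝ) < (((A * Aᵀ).det : ℤ) : ℝ) := by
    have h1 := det_sq_le'' R ⇑g g.injective hBRdet
    rw [hgram] at h1
    have h2 : (0:ℝ) < (R.submatrix id ⇑g).det ^ 2 := by positivity
    linarith
  have hD : 0 < sqrtDet A := Real.sqrt_pos.mpr hdetpos
  -- minor bound
  have hminor : ∀ h : Fin m → Fin n, Function.Injective h →
      |((A.submatrix id h).det : ℝ)| ≤ sqrtDet A := by
    intro h hinj
    rcases eq_or_ne ((A.submatrix id h).det : ℝ) 0 with h0 | h0
    · rw [h0]; simpa using hD.le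
    · have h1 := det_sq_le'' R h hinj (by rw [hmapdet]; exact h0)
      rw [hgram, hmapdet] at h1
      calc |((A.submatrix id h).det : ℝ)| = Real.sqrt (((A.submatrix id h).det : ℝ) ^ 2) :=
            (Real.sqrt_sq_eq_abs _).symm
      _ ≤ sqrtDet A := Real.sqrt_le_sqrt h1
  -- setup
  set BZ := A.submatrix id ⇑g with hBZ
  set Jc : Finset (Fin n) := (Finset.univ.image ⇑g)ᶜ with hJc
  have hcard : Jc.card = n - m := by
    rw [hJc, Finset.card_compl, Finset.card_image_of_injective _ g.injective]
    simp
  have hcardR : (Jc.card : ℝ) = (n : ℝ) - m := by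
    rw [hcard, Nat.cast_sub hmn.le]
  set detBR : ℝ := (BZ.det : ℝ) with hdetBR
  have hdetBRne : detBR ≠ 0 := by
    rw [hdetBR]
    exact_mod_cast hg
  -- the kernel vectors
  set z : Fin n → Fin n → ℤ := fun j c =>
    (if c = j then BZ.det else 0) -
      ∑ k : Fin m, (if c = ⇑g k then (BZ.adjugate *ᵥ (fun l => A l j)) k else 0) with hz
  have hzker : ∀ j, A *ᵥ z j = 0 := by
    intro j
    funext i
    set aj : Fin m → ℤ := fun l => A l j with haj
    set wv : Fin m → ℤ := BZ.adjugate *ᵥ aj with hwv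
    have h1 : (A *ᵥ z j) i =
        (∑ c, A i c * (if c = j then BZ.det else 0)) -
        ∑ c, A i c * ∑ k, (if c = ⇑g k then wv k else 0) := by
      simp only [Matrix.mulVec, dotProduct, hz, mul_sub]
      rw [Finset.sum_sub_distrib]
      rfl
    have h2 : (∑ c, A i c * (if c = j then BZ.det else 0)) = A i j * BZ.det := by
      simp [mul_ite]
    have h3 : (∑ c, A i c * ∑ k, (if c = ⇑g k then wv k else 0)) = A i j * BZ.det := by
      have h4 : ∀ c, A i c * ∑ k, (if c = ⇑g k then wv k else 0) =
          ∑ k, (if c = ⇑g k then A i (⇑g k) * wv k else 0) := by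
        intro c
        rw [Finset.mul_sum]
        refine Finset.sum_congr rfl (fun k _ => ?_)
        split_ifs with hck
        · rw [hck]
        · ring
      simp_rw [h4]
      rw [Finset.sum_comm]
      have h5 : ∀ k : Fin m, (∑ c, if c = ⇑g k then A i (⇑g k) * wv k else 0)
          = A i (⇑g k) * wv k := by
        intro k
        simp
      simp_rw [h5]
      have h6 : ∑ k, A i (⇑g k) * wv k = (BZ *ᵥ wv) i := by
        simp [Matrix.mulVec, dotProduct, hBZ]
      rw [h6, hwv, Matrix.mulVec_mulVec, Matrix.mul_adjugate, Matrix.smul_mulVec,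
        Matrix.one_mulVec]
      simp [haj, mul_comm]
    rw [Pi.zero_apply, h1, h2, h3, sub_self]
  have hzself : ∀ j ∈ Jc, z j j = BZ.det := by
    intro j hj
    have hj' : ∀ k : Fin m, j ≠ ⇑g k := by
      intro k hk
      rw [hJc, Finset.mem_compl] at hj
      exact hj (Finset.mem_image.mpr ⟨k, Finset.mem_univ k, hk.symm⟩)
    simp [hz, hj']
  have hzother : ∀ j ∈ Jc, ∀ j' ∈ Jc, j' ≠ j → z j j' = 0 := by
    intro j _ j' hj' hne
    have hj'' : ∀ k : Fin m, j' ≠ ⇑g k := by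
      intro k hk
      rw [hJc, Finset.mem_compl] at hj'
      exact hj' (Finset.mem_image.mpr ⟨k, Finset.mem_univ k, hk.symm⟩)
    simp [hz, hne, hj'']
  have hzbound : ∀ j ∈ Jc, ∀ c, |((z j c : ℤ) : ℝ)| ≤ sqrtDet A := by
    intro j hj c
    by_cases hc : c ∈ Finset.univ.image ⇑g
    · obtain ⟨k, -, hk⟩ := Finset.mem_image.mp hc
      have hcj : c ≠ j := by
        intro h
        rw [hJc, Finset.mem_compl] at hj
        exact hj (h ▸ hc)
      have hval : z j c = -(BZ.adjugate *ᵥ (fun l => A l j)) k := by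
        simp only [hz, if_neg hcj]
        rw [zero_sub, neg_inj]
        subst hk
        simp [g.injective.eq_iff]
      rw [hval]
      have hcr : (BZ.adjugate *ᵥ (fun l => A l j)) k =
          (BZ.updateCol k (fun l => A l j)).det := by
        rw [← Matrix.cramer_eq_adjugate_mulVec, Matrix.cramer_apply]
      have hupd : BZ.updateCol k (fun l => A l j) =
          A.submatrix id (Function.update ⇑g k j) := by
        ext l k'
        rw [Matrix.updateCol_apply, Matrix.submatrix_apply, Function.update_apply]
        split_ifs
        · rfl
        · simp [hBZ]
      have hjr : ∀ k0 : Fin m, j ≠ ⇑g k0 := by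
        intro k0 hk0
        rw [hJc, Finset.mem_compl] at hj
        exact hj (Finset.mem_image.mpr ⟨k0, Finset.mem_univ k0, hk0.symm⟩)
      have hinj' : Function.Injective (Function.update ⇑g k j) := by
        intro a b hab
        by_cases ha : a = k <;> by_cases hb : b = k
        · rw [ha, hb]
        · rw [Function.update_apply, Function.update_apply, if_pos ha, if_neg hb] at hab
          exact absurd hab (hjr b)
        · rw [Function.update_apply, Function.update_apply, if_neg ha, if_pos hb] at hab
          exact absurd hab.symm (hjr a)
        · rw [Function.update_apply, Function.update_apply, if_neg ha, if_neg hb] at hab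
          exact g.injective hab
      rw [hcr, hupd]
      rw [Int.cast_neg]
      rw [abs_neg]
      exact hminor _ hinj'
    · by_cases hcj : c = j
      · subst hcj
        rw [hzself c (by rwa [hJc, Finset.mem_compl])]
        exact hminor ⇑g g.injective
      · rw [hzother j hj c (by rwa [hJc, Finset.mem_compl]) hcj]
        simpa using hD.le
  set w : Fin n → Fin n → ℝ := fun j => Rvec (z j) with hw
  have hwker : ∀ j, R *ᵥ w j = 0 := by
    intro j
    rw [hw]
    show R *ᵥ Rvec (z j) = 0
    rw [hcastvec, hzker]
    funext i
    simp [Rvec]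
  -- span to kernel
  have hspan : ∀ x ∈ Submodule.span ℝ (kerLat A), R *ᵥ x = 0 := by
    intro x hx
    have hle : Submodule.span ℝ (kerLat A) ≤ LinearMap.ker R.mulVecLin := by
      rw [Submodule.span_le]
      rintro y ⟨zz, hzz, rfl⟩
      rw [SetLike.mem_coe, LinearMap.mem_ker, Matrix.mulVecLin_apply, hcastvec, hzz]
      funext i
      simp [Rvec]
    have := hle hx
    rwa [LinearMap.mem_ker, Matrix.mulVecLin_apply] at this
  -- representation of kernel vectors
  have hrep : ∀ x : Fin n → ℝ, R *ᵥ x = 0 → ∀ c, x c = ∑ j ∈ Jc, (x j / detBR) * w j c := by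
    intro x hx
    set u : Fin n → ℝ := fun c => x c - ∑ j ∈ Jc, (x j / detBR) * w j c with hu
    have huvec : u = x - ∑ j ∈ Jc, (x j / detBR) • w j := by
      funext c
      simp [hu, Finset.sum_apply]
    have huker : R *ᵥ u = 0 := by
      have hterm : ∀ j ∈ Jc, R.mulVecLin ((x j / detBR) • w j) = 0 := by
        intro j _
        rw [LinearMap.map_smul, Matrix.mulVecLin_apply, hwker j, smul_zero]
      have : R.mulVecLin u = 0 := by
        rw [huvec, map_sub, map_sum, Finset.sum_eq_zero hterm, sub_zero,
          Matrix.mulVecLin_apply, hx]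
      rwa [Matrix.mulVecLin_apply] at this
    have huoff : ∀ j' ∈ Jc, u j' = 0 := by
      intro j' hj'
      have hsum : ∑ j ∈ Jc, (x j / detBR) * w j j' = x j' := by
        rw [Finset.sum_eq_single j']
        · have hww : w j' j' = detBR := by
            simp [hw, Rvec, hzself j' hj', hdetBR]
          rw [hww, div_mul_cancel₀ _ hdetBRne]
        · intro j hj hne
          have hww : w j j' = 0 := by
            simp [hw, Rvec, hzother j hj j' hj' hne.symm]
          rw [hww, mul_zero]
        · intro h
          exact absurd hj' h
      simp [hu, hsum]
    have hucomp : ∀ k : Fin m, u (⇑g k) = 0 := by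
      have hBv : (R.submatrix id ⇑g) *ᵥ (u ∘ ⇑g) = 0 := by
        funext i
        have h1 : ((R.submatrix id ⇑g) *ᵥ (u ∘ ⇑g)) i = ∑ k, R i (⇑g k) * u (⇑g k) := by
          simp [Matrix.mulVec, dotProduct]
        have h2 : (0:ℝ) = ∑ c, R i c * u c := by
          have := congrFun huker i
          simp only [Matrix.mulVec, dotProduct, Pi.zero_apply] at this
          exact this.symm
        have h3 : ∑ c ∈ (Finset.univ.image ⇑g)ᶜ, R i c * u c = 0 :=
          Finset.sum_eq_zero (fun c hc => by
            rw [huoff c (by rw [hJc]; exact hc), mul_zero])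
        rw [h1, Pi.zero_apply, h2]
        rw [← Finset.sum_add_sum_compl (Finset.univ.image ⇑g) (fun c => R i c * u c)]
        rw [Finset.sum_image (fun a _ b _ hab => g.injective hab), h3, add_zero]
      have hUnit : IsUnit (R.submatrix id ⇑g).det := isUnit_iff_ne_zero.mpr hBRdet
      have := congrArg (fun v => (R.submatrix id ⇑g)⁻¹ *ᵥ v) hBv
      simpa [Matrix.mulVec_mulVec, Matrix.nonsing_inv_mul _ hUnit, Matrix.one_mulVec,
        Matrix.mulVec_zero, funext_iff] using this
    intro c
    have hc0 : u c = 0 := by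
      by_cases hc : c ∈ Finset.univ.image ⇑g
      · obtain ⟨k, -, hk⟩ := Finset.mem_image.mp hc
        rw [← hk]
        exact hucomp k
      · exact huoff c (by rwa [hJc, Finset.mem_compl])
    have := hc0
    simp only [hu] at this
    linarith
  -- the covering constant
  set μ : ℝ := ((n : ℝ) - m) / 2 * sqrtDet A with hμ
  have hnm : (0:ℝ) < (n : ℝ) - m := by
    have : (m:ℝ) < n := by exact_mod_cast hmn
    linarith
  have hμpos : 0 < μ := by
    rw [hμ]
    positivity
  -- membership in the defining set of muCov
  have hmem : μ ∈ {μ' : ℝ | 0 < μ' ∧ ∀ x ∈ Submodule.span ℝ (kerLat A),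
      ∃ T : Finset (Fin n → ℝ), ↑T ⊆ kerLat A ∧ 1 ≤ T.card ∧
        ∀ y ∈ T, ∃ k ∈ (fun x => x - fun _ => (1 : ℝ)) '' knap A (vA A), x = y + μ' • k} := by
    refine ⟨hμpos, fun x hx => ?_⟩
    have hxker : R *ᵥ x = 0 := hspan x hx
    set t : Fin n → ℝ := fun j => x j / detBR with ht
    set y : Fin n → ℤ := fun c => ∑ j ∈ Jc, round (t j) * z j c with hy
    have hyker : A *ᵥ y = 0 := by
      have hyvec : y = ∑ j ∈ Jc, round (t j) • z j := by
        funext c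
        simp [hy, Finset.sum_apply]
      have : A.mulVecLin y = 0 := by
        rw [hyvec, map_sum]
        simp only [map_zsmul, Matrix.mulVecLin_apply]
        exact Finset.sum_eq_zero (fun j _ => by rw [hzker j, smul_zero])
      rwa [Matrix.mulVecLin_apply] at this
    set yR : Fin n → ℝ := Rvec y with hyR
    have hyRmem : yR ∈ kerLat A := ⟨y, hyker, rfl⟩
    have hyRc : ∀ c, yR c = ∑ j ∈ Jc, (round (t j) : ℝ) * w j c := by
      intro c
      simp only [hyR, Rvec, hy, hw]
      push_cast
      rfl
    have hbound : ∀ c, |x c - yR c| ≤ μ := by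
      intro c
      have hxc := hrep x hxker c
      have h1 : x c - yR c = ∑ j ∈ Jc, (t j - round (t j)) * w j c := by
        rw [hxc, hyRc c, ← Finset.sum_sub_distrib]
        exact Finset.sum_congr rfl (fun j _ => by rw [ht, sub_mul])
      rw [h1]
      calc |∑ j ∈ Jc, (t j - round (t j)) * w j c|
          ≤ ∑ j ∈ Jc, |(t j - round (t j)) * w j c| := Finset.abs_sum_le_sum_abs _ _
      _ ≤ ∑ j ∈ Jc, 1 / 2 * sqrtDet A := by
          refine Finset.sum_le_sum (fun j hj => ?_)
          rw [abs_mul]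
          exact mul_le_mul (abs_sub_round _) (hzbound j hj c) (abs_nonneg _) (by norm_num)
      _ = μ := by
          rw [Finset.sum_const, nsmul_eq_mul, hcardR, hμ]
          ring
    refine ⟨{yR}, by simpa using hyRmem, by simp, fun y' hy' => ?_⟩
    rw [Finset.mem_singleton] at hy'
    subst hy'
    refine ⟨μ⁻¹ • (x - yR), ?_, ?_⟩
    · rw [Set.mem_image]
      refine ⟨(μ⁻¹ • (x - yR)) + fun _ => 1, ⟨?_, ?_⟩, ?_⟩
      · intro i
        have h1 : -μ ≤ x i - yR i := (abs_le.mp (hbound i)).1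
        have h2 : μ⁻¹ * (-μ) ≤ μ⁻¹ * (x i - yR i) :=
          mul_le_mul_of_nonneg_left h1 (inv_nonneg.mpr hμpos.le)
        have h3 : μ⁻¹ * (-μ) = -1 := by
          field_simp
        simp only [Pi.add_apply, Pi.smul_apply, Pi.sub_apply, smul_eq_mul]
        linarith
      · have hRyR : R *ᵥ yR = 0 := by
          rw [hyR]
          show R *ᵥ Rvec y = 0
          rw [hcastvec, hyker]
          funext i
          simp [Rvec]
        show R *ᵥ _ = vA A
        rw [Matrix.mulVec_add, Matrix.mulVec_smul, Matrix.mulVec_sub, hxker, hRyR, sub_zero,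
          smul_zero, zero_add]
        rfl
      · funext c
        simp
    · funext c
      simp only [Pi.add_apply, Pi.smul_apply, Pi.sub_apply, smul_eq_mul]
      field_simp
      ring
  -- conclude
  have hbdd : BddBelow {μ' : ℝ | 0 < μ' ∧ ∀ x ∈ Submodule.span ℝ (kerLat A),
      ∃ T : Finset (Fin n → ℝ), ↑T ⊆ kerLat A ∧ 1 ≤ T.card ∧
        ∀ y ∈ T, ∃ k ∈ (fun x => x - fun _ => (1 : ℝ)) '' knap A (vA A), x = y + μ' • k} :=
    ⟨0, fun a ha => ha.1.le⟩
  exact csInf_le hbdd hmem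


end
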